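/- Let n be a positive integer, I ⊊ {1, …, n} nonempty, m ∈ {1, …, n} \ I, let c_i > 0 for i ∈ I, and set d := Σ_{i ∈ I} c_i. Then the set C := {x ∈ ℝ^n : x_j ≥ 0 for all j, and Π_{i ∈ I} x_i^{c_i} ≥ x_m^d} is a convex cone: it is closed under addition and under multiplication by nonnegative scalars. -/
import Mathlib


open scoped BigOperators

/-- Superadditivity of the weighted geometric mean with positive weights summing to 1. -/
lemma geom_mean_superadd {ι : Type*} (s : Finset ι) (w x y : ι → ℝ)
    (hw : ∀ i ∈ s, 0 < w i) (hw1 : ∑ i ∈ s, w i = 1)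
    (hx : ∀ i ∈ s, 0 ≤ x i) (hy : ∀ i ∈ s, 0 ≤ y i) :
    (∏ i ∈ s, x i ^ w i) + ∏ i ∈ s, y i ^ w i ≤ ∏ i ∈ s, (x i + y i) ^ w i := by
  by_cases h : ∀ i ∈ s, 0 < x i + y i
  · have hP : (0:ℝ) < ∏ i ∈ s, (x i + y i) ^ w i :=
      Finset.prod_pos fun i hi => Real.rpow_pos_of_pos (h i hi) _
    have key : ∀ z : ι → ℝ, (∀ i ∈ s, 0 ≤ z i) →
        (∏ i ∈ s, z i ^ w i) ≤
          (∑ i ∈ s, w i * (z i / (x i + y i))) * ∏ i ∈ s, (x i + y i) ^ w i := by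
      intro z hz
      have hq : ∀ i ∈ s, 0 ≤ z i / (x i + y i) := fun i hi =>
        div_nonneg (hz i hi) (h i hi).le
      have amgm := Real.geom_mean_le_arith_mean_weighted s w (fun i => z i / (x i + y i))
        (fun i hi => (hw i hi).le) hw1 hq
      have hprod : (∏ i ∈ s, z i ^ w i) =
          (∏ i ∈ s, (z i / (x i + y i)) ^ w i) * ∏ i ∈ s, (x i + y i) ^ w i := by
        rw [← Finset.prod_mul_distrib]
        refine Finset.prod_congr rfl fun i hi => ?_
        rw [← Real.mul_rpow (hq i hi) (h i hi).le, div_mul_cancel₀ _ (h i hi).ne']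
      rw [hprod]
      exact mul_le_mul_of_nonneg_right amgm hP.le
    have hxk := key x hx
    have hyk := key y hy
    have hsum : (∑ i ∈ s, w i * (x i / (x i + y i))) +
        (∑ i ∈ s, w i * (y i / (x i + y i))) = 1 := by
      rw [← Finset.sum_add_distrib, ← hw1]
      refine Finset.sum_congr rfl fun i hi => ?_
      rw [← mul_add, ← add_div, div_self (h i hi).ne', mul_one]
    calc (∏ i ∈ s, x i ^ w i) + ∏ i ∈ s, y i ^ w i
        ≤ ((∑ i ∈ s, w i * (x i / (x i + y i))) +
            ∑ i ∈ s, w i * (y i / (x i + y i))) * ∏ i ∈ s, (x i + y i) ^ w i := by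
          rw [add_mul]; exact add_le_add hxk hyk
      _ = ∏ i ∈ s, (x i + y i) ^ w i := by rw [hsum, one_mul]
  · push_neg at h
    obtain ⟨i, hi, hle⟩ := h
    have hxi : x i = 0 := le_antisymm (by nlinarith [hx i hi, hy i hi]) (hx i hi)
    have hyi : y i = 0 := le_antisymm (by nlinarith [hx i hi, hy i hi]) (hy i hi)
    have hx0 : (∏ j ∈ s, x j ^ w j) = 0 :=
      Finset.prod_eq_zero hi (by rw [hxi, Real.zero_rpow (hw i hi).ne'])
    have hy0 : (∏ j ∈ s, y j ^ w j) = 0 :=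
      Finset.prod_eq_zero hi (by rw [hyi, Real.zero_rpow (hw i hi).ne'])
    rw [hx0, hy0, add_zero]
    exact Finset.prod_nonneg fun j hj =>
      Real.rpow_nonneg (add_nonneg (hx j hj) (hy j hj)) _

/-- The set of nonnegative solutions of the binomial inequality
`Π_{i ∈ I} x_i^{c_i} ≥ x_m^d` with `d = Σ_{i ∈ I} c_i` (real powers). -/
noncomputable def binomialCone {n : ℕ} (I : Finset (Fin n)) (m : Fin n)
    (c : Fin n → ℝ) : Set (Fin n → ℝ) :=
  {x | (∀ j, 0 ≤ x j) ∧ x m ^ (∑ i ∈ I, c i) ≤ ∏ i ∈ I, x i ^ c i}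

/-- For a nonempty proper subset `I ⊊ {1, …, n}`, `m ∉ I`, and weights
`c_i > 0` (`i ∈ I`) with `d = Σ_{i ∈ I} c_i`, the set
`C = {x ∈ ℝ≥0ⁿ : Π_{i ∈ I} x_i^{c_i} ≥ x_m^d}` is a convex cone:
closed under addition and under multiplication by nonnegative scalars. -/
theorem binomialCone_convex_cone {n : ℕ} (hn : 0 < n) (I : Finset (Fin n))
    (hI : I.Nonempty) (hIproper : I ≠ Finset.univ) (m : Fin n) (hm : m ∉ I)
    (c : Fin n → ℝ) (hc : ∀ i ∈ I, 0 < c i) :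
    (∀ x ∈ binomialCone I m c, ∀ y ∈ binomialCone I m c,
        x + y ∈ binomialCone I m c) ∧
    (∀ x ∈ binomialCone I m c, ∀ t : ℝ, 0 ≤ t → t • x ∈ binomialCone I m c) := by
  set d : ℝ := ∑ i ∈ I, c i with hd_def
  have hd : 0 < d := Finset.sum_pos hc hI
  constructor
  · rintro x ⟨hx0, hx⟩ y ⟨hy0, hy⟩
    refine ⟨fun j => add_nonneg (hx0 j) (hy0 j), ?_⟩
    set w : Fin n → ℝ := fun i => c i / d with hw_def
    have hw : ∀ i ∈ I, 0 < w i := fun i hi => div_pos (hc i hi) hd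
    have hw1 : ∑ i ∈ I, w i = 1 := by
      rw [hw_def, ← Finset.sum_div, ← hd_def, div_self hd.ne']
    have hpow : ∀ z : Fin n → ℝ, (∀ j, 0 ≤ z j) →
        (∏ i ∈ I, z i ^ w i) ^ d = ∏ i ∈ I, z i ^ c i := by
      intro z hz
      rw [← Real.finset_prod_rpow I _ (fun i _ => Real.rpow_nonneg (hz i) _) d]
      refine Finset.prod_congr rfl fun i hi => ?_
      rw [← Real.rpow_mul (hz i), div_mul_cancel₀ _ hd.ne']
    have hroot : ∀ z : Fin n → ℝ, (∀ j, 0 ≤ z j) →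
        z m ^ d ≤ ∏ i ∈ I, z i ^ c i → z m ≤ ∏ i ∈ I, z i ^ w i := by
      intro z hz hzle
      rw [← Real.rpow_le_rpow_iff (hz m)
        (Finset.prod_nonneg fun i _ => Real.rpow_nonneg (hz i) _) hd, hpow z hz]
      exact hzle
    have hxA : x m ≤ ∏ i ∈ I, x i ^ w i := hroot x hx0 hx
    have hyB : y m ≤ ∏ i ∈ I, y i ^ w i := hroot y hy0 hy
    have hsup := geom_mean_superadd I w x y hw hw1 (fun i _ => hx0 i) (fun i _ => hy0 i)
    show (x m + y m) ^ d ≤ ∏ i ∈ I, (x i + y i) ^ c i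
    rw [← hpow (fun i => x i + y i) (fun j => add_nonneg (hx0 j) (hy0 j))]
    exact Real.rpow_le_rpow (add_nonneg (hx0 m) (hy0 m))
      (le_trans (add_le_add hxA hyB) hsup) hd.le
  · rintro x ⟨hx0, hx⟩ t ht
    refine ⟨fun j => mul_nonneg ht (hx0 j), ?_⟩
    show (t * x m) ^ d ≤ ∏ i ∈ I, (t * x i) ^ c i
    rw [Real.mul_rpow ht (hx0 m)]
    calc t ^ d * x m ^ d ≤ t ^ d * ∏ i ∈ I, x i ^ c i :=
          mul_le_mul_of_nonneg_left hx (Real.rpow_nonneg ht d)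
      _ = ∏ i ∈ I, (t * x i) ^ c i := by
          rw [hd_def, Real.rpow_sum_of_nonneg ht (fun i hi => (hc i hi).le),
            ← Finset.prod_mul_distrib]
          exact Finset.prod_congr rfl fun i hi => (Real.mul_rpow ht (hx0 i)).symm
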